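/- On an open subset of ℝ³ with coordinates (t,x,y) where t ≠ 0 and t - tan(t) ≠ 0, let A = ∂_t + ((ty + x - 2y·tan t)/(t - tan t))∂_x + ((x + (tx - t²y - y)tan t)/(t² - t·tan t))∂_y and X_1 = ∂_x + (1/t)∂_y. Then the function I_2(t,x,y) = (yt - x)/(t·cos t - sin t) satisfies A(I_2) = 0 and X_1(I_2) = 0. -/

import Mathlib

noncomputable section

/-- Points `(t, x, y)` of the extended phase space, modelled as ℝ³. -/
abbrev R3 := ℝ × ℝ × ℝ

/-- The vector field associated to the system
`dx/dt = (ty + x - 2y·tan t)/(t - tan t)`,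
`dy/dt = (x + (tx - t²y - y)·tan t)/(t² - t·tan t)`. -/
def Asys (p : R3) : R3 :=
  (1,
   (p.1 * p.2.2 + p.2.1 - 2 * p.2.2 * Real.tan p.1) / (p.1 - Real.tan p.1),
   (p.2.1 + (p.1 * p.2.1 - p.1 ^ 2 * p.2.2 - p.2.2) * Real.tan p.1) /
     (p.1 ^ 2 - p.1 * Real.tan p.1))

/-- `X₁ = ∂_x + (1/t)∂_y`. -/
def X1sys (p : R3) : R3 := (0, 1, 1 / p.1)

/-- `I₂ = (yt - x)/(t·cos t - sin t)`. -/
def I2sys (p : R3) : ℝ := (p.2.2 * p.1 - p.2.1) / (p.1 * Real.cos p.1 - Real.sin p.1)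

/-- on the open set where `t ≠ 0`, `t - tan t ≠ 0`, `t·cos t - sin t ≠ 0` and
`cos t ≠ 0`, the function `I₂ = (yt - x)/(t·cos t - sin t)` satisfies `A(I₂) = 0` and
`X₁(I₂) = 0`. -/
theorem first_integral_system :
    ∀ p : R3, p.1 ≠ 0 → p.1 - Real.tan p.1 ≠ 0 →
      p.1 * Real.cos p.1 - Real.sin p.1 ≠ 0 → Real.cos p.1 ≠ 0 →
      fderiv ℝ I2sys p (Asys p) = 0 ∧ fderiv ℝ I2sys p (X1sys p) = 0 := by
  intro p ht htan hD hc
  have hT : HasFDerivAt (fun q : R3 => q.1) (ContinuousLinearMap.fst ℝ ℝ (ℝ × ℝ)) p :=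
    hasFDerivAt_fst
  have hS : HasFDerivAt (fun q : R3 => q.2) (ContinuousLinearMap.snd ℝ ℝ (ℝ × ℝ)) p :=
    hasFDerivAt_snd
  have hX : HasFDerivAt (fun q : R3 => q.2.1)
      ((ContinuousLinearMap.fst ℝ ℝ ℝ).comp (ContinuousLinearMap.snd ℝ ℝ (ℝ × ℝ))) p :=
    hasFDerivAt_fst.comp p hS
  have hY : HasFDerivAt (fun q : R3 => q.2.2)
      ((ContinuousLinearMap.snd ℝ ℝ ℝ).comp (ContinuousLinearMap.snd ℝ ℝ (ℝ × ℝ))) p :=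
    hasFDerivAt_snd.comp p hS
  have hcos : HasFDerivAt (fun q : R3 => Real.cos q.1)
      (((1 : ℝ →L[ℝ] ℝ).smulRight (-Real.sin p.1)).comp
        (ContinuousLinearMap.fst ℝ ℝ (ℝ × ℝ))) p :=
    (Real.hasDerivAt_cos p.1).hasFDerivAt.comp p hT
  have hsin : HasFDerivAt (fun q : R3 => Real.sin q.1)
      (((1 : ℝ →L[ℝ] ℝ).smulRight (Real.cos p.1)).comp
        (ContinuousLinearMap.fst ℝ ℝ (ℝ × ℝ))) p :=
    (Real.hasDerivAt_sin p.1).hasFDerivAt.comp p hT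
  have hf := (hY.mul hT).sub hX
  have hg := (hT.mul hcos).sub hsin
  have hinv : HasFDerivAt (fun q : R3 => (q.1 * Real.cos q.1 - Real.sin q.1)⁻¹) _ p :=
    (hasDerivAt_inv hD).hasFDerivAt.comp p hg
  have hdiv := hf.mul hinv
  have hI : I2sys = fun q : R3 =>
      (q.2.2 * q.1 - q.2.1) * (q.1 * Real.cos q.1 - Real.sin q.1)⁻¹ :=
    funext fun q => div_eq_mul_inv _ _
  rw [hI]
  simp only [Pi.mul_def, Pi.sub_def] at hdiv
  rw [hdiv.fderiv]
  have h2 : -(p.1 * Real.sin p.1) + p.1 ^ 2 * Real.cos p.1 ≠ 0 := by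
    have h := mul_ne_zero ht hD
    intro h0; apply h
    nlinarith [h0]
  have h3 : p.1 * Real.cos p.1 - Real.sin p.1 ≠ 0 := hD
  rw [Real.tan_eq_sin_div_cos] at htan
  have htc : p.1 * Real.cos p.1 - Real.sin p.1 ≠ 0 := hD
  have hfx : (p.1 * p.2.2 + p.2.1 - 2 * p.2.2 * Real.tan p.1) / (p.1 - Real.tan p.1) =
      (p.1 * p.2.2 * Real.cos p.1 + p.2.1 * Real.cos p.1 - 2 * p.2.2 * Real.sin p.1) /
        (p.1 * Real.cos p.1 - Real.sin p.1) := by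
    rw [Real.tan_eq_sin_div_cos]
    field_simp
  have hfy : (p.2.1 + (p.1 * p.2.1 - p.1 ^ 2 * p.2.2 - p.2.2) * Real.tan p.1) /
        (p.1 ^ 2 - p.1 * Real.tan p.1) =
      (p.2.1 * Real.cos p.1 + (p.1 * p.2.1 - p.1 ^ 2 * p.2.2 - p.2.2) * Real.sin p.1) /
        (p.1 * (p.1 * Real.cos p.1 - Real.sin p.1)) := by
    rw [Real.tan_eq_sin_div_cos,
      show p.1 ^ 2 - p.1 * (Real.sin p.1 / Real.cos p.1)
        = p.1 * (p.1 - Real.sin p.1 / Real.cos p.1) by ring,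
      div_eq_div_iff (mul_ne_zero ht htan) (mul_ne_zero ht hD)]
    field_simp
  constructor
  · simp only [Asys, ContinuousLinearMap.smul_apply, ContinuousLinearMap.sub_apply,
      ContinuousLinearMap.add_apply, ContinuousLinearMap.comp_apply,
      ContinuousLinearMap.smulRight_apply, ContinuousLinearMap.one_apply,
      ContinuousLinearMap.coe_fst', ContinuousLinearMap.coe_snd', smul_eq_mul,
      ContinuousLinearMap.toSpanSingleton_apply]
    rw [hfx, hfy]
    field_simp
    ring
  · simp only [X1sys, ContinuousLinearMap.smul_apply, ContinuousLinearMap.sub_apply,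
      ContinuousLinearMap.add_apply, ContinuousLinearMap.comp_apply,
      ContinuousLinearMap.smulRight_apply, ContinuousLinearMap.one_apply,
      ContinuousLinearMap.coe_fst', ContinuousLinearMap.coe_snd', smul_eq_mul,
      ContinuousLinearMap.toSpanSingleton_apply]
    field_simp
    ring
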